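/- If the 3-cocycle f_σ associated to a normalized s-section (s,σ) of a crossed extension is a coboundary, f_σ(x,y,z) = x·k(y,z) − k(xy,z) + k(x,yz) − k(x,y) for some k: G² → M, then setting τ(x,y) = σ(x,y)·k(x,y)^{-1} (viewing M ⊆ T, written additively in M as σ − k), (s, τ) is again an s-section of the same crossed extension and its associated 3-cocycle f_τ is identically zero. -/
import Mathlib

theorem shuffle14 {T : Type*} [Group T] (A B C D a b c d : T)
    (ha : ∀ u, a * u = u * a) (hb : ∀ u, b * u = u * b)
    (hc : ∀ u, c * u = u * c) (hd : ∀ u, d * u = u * d)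
    (h : A * B * C⁻¹ * D⁻¹ = a * c⁻¹ * b * d⁻¹) :
    (A * a⁻¹) * (B * b⁻¹) * (C * c⁻¹)⁻¹ * (D * d⁻¹)⁻¹ = 1 := by
  have ha' : ∀ u, a⁻¹ * u = u * a⁻¹ := fun u => by
    simpa using (congrArg Inv.inv (ha u⁻¹)).symm
  have hb' : ∀ u, b⁻¹ * u = u * b⁻¹ := fun u => by
    simpa using (congrArg Inv.inv (hb u⁻¹)).symm
  have key : (A * a⁻¹) * (B * b⁻¹) * (C * c⁻¹)⁻¹ * (D * d⁻¹)⁻¹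
      = (A * B * C⁻¹ * D⁻¹) * (d * (c * (b⁻¹ * a⁻¹))) := by
    simp only [mul_inv_rev, inv_inv, mul_assoc]
    rw [ha' (B * (b⁻¹ * (c * (C⁻¹ * (d * D⁻¹)))))]
    rw [hb' (c * (C⁻¹ * (d * D⁻¹)))]
    rw [hc (C⁻¹ * (d * D⁻¹))]
    rw [hd D⁻¹]
    simp only [mul_assoc]
  rw [key, h]
  simp only [mul_assoc, inv_mul_cancel_left]
  rw [hc (b⁻¹ * a⁻¹)]
  simp only [mul_assoc, inv_mul_cancel_left]
  rw [ha' c]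
  simp

/-- If the 3-cocycle `f_σ` of a normalized s-section `(s,σ)`
is the coboundary of `k : G² → M` (`M = ker ∂ ⊆ T`, written
multiplicatively), then `τ(x,y) = σ(x,y)·k(x,y)⁻¹` gives another s-section
`(s,τ)` of the same crossed extension whose 3-cocycle `f_τ` is trivial. -/
theorem stmt14 {T R G : Type*} [Group T] [Group R] [Group G]
    [MulDistribMulAction R T] (δ : T →* R)
    (hpeif1 : ∀ (r : R) (t : T), δ (r • t) = r * δ t * r⁻¹)
    (hpeif2 : ∀ t u : T, (δ t) • u = t * u * t⁻¹)
    (p : R →* G) (hp : Function.Surjective p)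
    (hexact : ∀ r : R, p r = 1 ↔ r ∈ δ.range)
    (s : G → R) (σ : G → G → T)
    (hs : ∀ x, p (s x) = x)
    (hσ : ∀ x y, s x * s y = δ (σ x y) * s (x * y))
    (hs1 : s 1 = 1) (hσ1 : ∀ x, σ 1 x = 1 ∧ σ x 1 = 1)
    (f : G → G → G → T)
    (hf : ∀ x y z, f x y z =
      (s x • σ y z) * σ x (y * z) * (σ (x * y) z)⁻¹ * (σ x y)⁻¹)
    -- k : G² → M = ker δ
    (k : G → G → T) (hk : ∀ x y, k x y ∈ δ.ker)
    -- f_σ is the coboundary of k (multiplicative notation)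
    (hcob : ∀ x y z, f x y z =
      (s x • k y z) * (k (x * y) z)⁻¹ * k x (y * z) * (k x y)⁻¹)
    (τ : G → G → T) (hτ : ∀ x y, τ x y = σ x y * (k x y)⁻¹) :
    (∀ x y, s x * s y = δ (τ x y) * s (x * y)) ∧
    (∀ x y z, (s x • τ y z) * τ x (y * z) * (τ (x * y) z)⁻¹ * (τ x y)⁻¹ = 1) := by
  -- elements of ker δ are central
  have hcen : ∀ m : T, δ m = 1 → ∀ u : T, m * u = u * m := by
    intro m hm u
    have := hpeif2 m u
    rw [hm, one_smul] at this
    conv_rhs => rw [this]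
    group
  constructor
  · intro x y
    rw [hτ, map_mul, map_inv, hk x y, inv_one, mul_one, hσ]
  · intro x y z
    have hker : ∀ x y, δ (k x y) = 1 := fun x y => hk x y
    have hka : δ (s x • k y z) = 1 := by
      rw [hpeif1, hker]; group
    have h : (s x • σ y z) * σ x (y * z) * (σ (x * y) z)⁻¹ * (σ x y)⁻¹
        = (s x • k y z) * (k (x * y) z)⁻¹ * k x (y * z) * (k x y)⁻¹ := by
      rw [← hf, hcob]
    simp only [hτ, smul_mul', smul_inv']
    exact shuffle14 _ _ _ _ _ _ _ _
      (hcen _ hka) (hcen _ (hker x (y * z))) (hcen _ (hker (x * y) z))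
      (hcen _ (hker x y)) h
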